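/- Consider the right Möbius action of GL_2(F) on P^1(F) where g = [[a,b],[c,d]] sends z to (az+c)/(bz+d). The orbits of the congruence subgroup G_{v0}(k) = {g ∈ GL_2(O) : g ≡ 1 mod ϖ^k} on the unit ball B_z(0,1) = {z ∈ F : |z| ≤ 1} are exactly the closed discs B_z(z_0, |ϖ|^k) = {z : |z − z_0| ≤ |ϖ|^k} for z_0 ∈ B_z(0,1). -/

import Mathlib

open Matrix Pointwise
open scoped OnePoint

noncomputable section

/-- `ϖ` is a uniformizer of the nonarchimedean field `F`. -/
def IsUniformizer (F : Type*) [NormedField F] (ϖ : F) : Prop :=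
  ϖ ≠ 0 ∧ ‖ϖ‖ < 1 ∧ ∀ x : F, ‖x‖ < 1 → ‖x‖ ≤ ‖ϖ‖

/-- The principal congruence subgroup `G_{v₀}(k)` of level `k`: matrices in `GL₂(𝒪)`
congruent to the identity modulo `ϖ^k` (entrywise, each entry of `g - 1` lies in `ϖ^k 𝒪`,
i.e. has norm at most `‖ϖ‖^k`). -/
def Gv0 (F : Type*) [NormedField F] (ϖ : F) (k : ℕ) : Set (GL (Fin 2) F) :=
  {g | ‖(g : Matrix (Fin 2) (Fin 2) F) 0 0 - 1‖ ≤ ‖ϖ‖ ^ k ∧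
       ‖(g : Matrix (Fin 2) (Fin 2) F) 0 1‖ ≤ ‖ϖ‖ ^ k ∧
       ‖(g : Matrix (Fin 2) (Fin 2) F) 1 0‖ ≤ ‖ϖ‖ ^ k ∧
       ‖(g : Matrix (Fin 2) (Fin 2) F) 1 1 - 1‖ ≤ ‖ϖ‖ ^ k}

/-- The diagonal matrix `diag(ϖ, 1)` as an element of `GL₂(F)`. -/
def dmat (F : Type*) [Field F] (ϖ : F) (h : ϖ ≠ 0) : GL (Fin 2) F :=
  Matrix.GeneralLinearGroup.mkOfDetNeZero !![ϖ, 0; 0, 1]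
    (by simpa [Matrix.det_fin_two_of] using h)

/-- `G_{v₁}(k) = diag(ϖ,1) · G_{v₀}(k) · diag(ϖ,1)⁻¹`. -/
def Gv1 (F : Type*) [NormedField F] (ϖ : F) (h : ϖ ≠ 0) (k : ℕ) : Set (GL (Fin 2) F) :=
  (fun g => dmat F ϖ h * g * (dmat F ϖ h)⁻¹) '' Gv0 F ϖ k

/-- The explicit set `H` of matrices `[[1+ϖ^k a, ϖ^k b],[ϖ^{k-1} c, 1+ϖ^k d]]`, `a,b,c,d ∈ 𝒪`;
this is the edge group `G_e(k)`. -/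
def Ge (F : Type*) [NormedField F] (ϖ : F) (k : ℕ) : Set (GL (Fin 2) F) :=
  {g | ‖(g : Matrix (Fin 2) (Fin 2) F) 0 0 - 1‖ ≤ ‖ϖ‖ ^ k ∧
       ‖(g : Matrix (Fin 2) (Fin 2) F) 0 1‖ ≤ ‖ϖ‖ ^ k ∧
       ‖(g : Matrix (Fin 2) (Fin 2) F) 1 0‖ ≤ ‖ϖ‖ ^ (k - 1) ∧
       ‖(g : Matrix (Fin 2) (Fin 2) F) 1 1 - 1‖ ≤ ‖ϖ‖ ^ k}

/-- The explicit description of `G_{v₁}(k)`: matrices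
`[[1+ϖ^k a, ϖ^{k+1} b],[ϖ^{k-1} c, 1+ϖ^k d]]` with `a,b,c,d ∈ 𝒪`. -/
def Gv1ex (F : Type*) [NormedField F] (ϖ : F) (k : ℕ) : Set (GL (Fin 2) F) :=
  {g | ‖(g : Matrix (Fin 2) (Fin 2) F) 0 0 - 1‖ ≤ ‖ϖ‖ ^ k ∧
       ‖(g : Matrix (Fin 2) (Fin 2) F) 0 1‖ ≤ ‖ϖ‖ ^ (k + 1) ∧
       ‖(g : Matrix (Fin 2) (Fin 2) F) 1 0‖ ≤ ‖ϖ‖ ^ (k - 1) ∧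
       ‖(g : Matrix (Fin 2) (Fin 2) F) 1 1 - 1‖ ≤ ‖ϖ‖ ^ k}

open scoped Classical in
/-- The right Möbius action of `g = [[a,b],[c,d]]` on `ℙ¹(F) = F ∪ {∞}` (here modelled as
`Option F`, with `none = ∞`): `z·g = (az+c)/(bz+d)`, `∞·g = a/b`, with value `∞` when the
denominator vanishes. -/
def moeb (F : Type*) [Field F] (g : Matrix (Fin 2) (Fin 2) F) : Option F → Option F
  | Option.some z => if g 0 1 * z + g 1 1 = 0 then Option.none
      else Option.some ((g 0 0 * z + g 1 0) / (g 0 1 * z + g 1 1))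
  | Option.none => if g 0 1 = 0 then Option.none else Option.some (g 0 0 / g 0 1)

/-- The orbit of `z ∈ ℙ¹(F)` under a set `S` of elements of `GL₂(F)` acting on the right by
Möbius transformations. -/
def orb (F : Type*) [Field F] (S : Set (GL (Fin 2) F)) (z : Option F) : Set (Option F) :=
  {w | ∃ g ∈ S, moeb F (g : Matrix (Fin 2) (Fin 2) F) z = w}

/-- `D` is an orbit of `S` on `ℙ¹(F)`. -/
def IsOrbit (F : Type*) [Field F] (S : Set (GL (Fin 2) F)) (D : Set (Option F)) : Prop :=
  ∃ z, D = orb F S z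

/-- The region `B_w(∞, |ϖ|) = {w ∈ ℙ¹(F) : |1/w| ≤ |ϖ|} = {|w| ≥ |ϖ|⁻¹} ∪ {∞}`. -/
def regionInfty (F : Type*) [NormedField F] (ϖ : F) : Set (Option F) :=
  {w | w = Option.none ∨ ∃ z : F, w = Option.some z ∧ ‖ϖ‖⁻¹ ≤ ‖z‖}

/-- The coordinate `1/w` on `ℙ¹(F)`, with `1/∞ = 0`. -/
def invc (F : Type*) [Field F] : Option F → F
  | Option.none => 0
  | Option.some z => z⁻¹

/-- The residue field of `F` has cardinality `q`: there are exactly `q` classes in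
`𝒪/(ϖ)`, witnessed by a set of representatives. -/
def ResidueCard (F : Type*) [NormedField F] (ϖ : F) (q : ℕ) : Prop :=
  ∃ s : Finset F, s.card = q ∧ (∀ x ∈ s, ‖x‖ ≤ 1) ∧
    ∀ x : F, ‖x‖ ≤ 1 → ∃! y, y ∈ s ∧ ‖x - y‖ ≤ ‖ϖ‖

/-- The conjugate `h S h⁻¹` of a set of matrices. -/
def conjSet (F : Type*) [Field F] (h : GL (Fin 2) F) (S : Set (GL (Fin 2) F)) :
    Set (GL (Fin 2) F) :=
  (fun g => h * g * h⁻¹) '' S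

/-- The matrix `g_α = [[1,0],[α,ϖ]]` as an element of `GL₂(F)`. -/
def galpha (F : Type*) [Field F] (ϖ α : F) (h : ϖ ≠ 0) : GL (Fin 2) F :=
  Matrix.GeneralLinearGroup.mkOfDetNeZero !![1, 0; α, ϖ]
    (by simpa [Matrix.det_fin_two_of] using h)

/-- The diagonal matrix `diag(1, ϖ^n)` as an element of `GL₂(F)`. -/
def dmatN (F : Type*) [Field F] (ϖ : F) (h : ϖ ≠ 0) (n : ℕ) : GL (Fin 2) F :=
  Matrix.GeneralLinearGroup.mkOfDetNeZero !![1, 0; 0, ϖ ^ n]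
    (by simpa [Matrix.det_fin_two_of] using pow_ne_zero n h)

theorem statement5 (p : ℕ) [Fact p.Prime] (F : Type*) [NontriviallyNormedField F]
    [IsUltrametricDist F] [NormedAlgebra ℚ_[p] F] [FiniteDimensional ℚ_[p] F]
    (ϖ : F) (hϖ : IsUniformizer F ϖ) (k : ℕ) (hk : 1 ≤ k) :
    ∀ z₀ : F, ‖z₀‖ ≤ 1 →
      orb F (Gv0 F ϖ k) (Option.some z₀) =
        Option.some '' {z : F | ‖z - z₀‖ ≤ ‖ϖ‖ ^ k} := by
  intro z₀ hz₀
  have hε1 : ‖ϖ‖ ^ k < 1 := pow_lt_one₀ (norm_nonneg _) hϖ.2.1 (by omega)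
  have hε0 : (0:ℝ) ≤ ‖ϖ‖ ^ k := pow_nonneg (norm_nonneg _) k
  ext w
  simp only [orb, Set.mem_image, Set.mem_setOf_eq]
  constructor
  · rintro ⟨g, ⟨ha, hb, hc, hd⟩, hgw⟩
    set M := (g : Matrix (Fin 2) (Fin 2) F) with hM
    -- the denominator has norm 1
    have hsmall : ‖M 0 1 * z₀ + (M 1 1 - 1)‖ < 1 := by
      refine lt_of_le_of_lt ((IsUltrametricDist.norm_add_le_max _ _).trans ?_) hε1
      refine max_le ?_ hd
      calc ‖M 0 1 * z₀‖ = ‖M 0 1‖ * ‖z₀‖ := norm_mul _ _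
        _ ≤ ‖ϖ‖ ^ k * 1 := mul_le_mul hb hz₀ (norm_nonneg _) hε0
        _ = ‖ϖ‖ ^ k := mul_one _
    have hdnorm : ‖M 0 1 * z₀ + M 1 1‖ = 1 := by
      have he : M 0 1 * z₀ + M 1 1 = 1 + (M 0 1 * z₀ + (M 1 1 - 1)) := by ring
      rw [he, IsUltrametricDist.norm_add_eq_max_of_norm_ne_norm
        (by rw [norm_one]; exact (hsmall.trans_le le_rfl).ne'), norm_one]
      exact max_eq_left hsmall.le
    have hdne : M 0 1 * z₀ + M 1 1 ≠ 0 := by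
      intro h0; rw [h0, norm_zero] at hdnorm; norm_num at hdnorm
    simp only [moeb] at hgw
    rw [if_neg hdne] at hgw
    refine ⟨(M 0 0 * z₀ + M 1 0) / (M 0 1 * z₀ + M 1 1), ?_, hgw⟩
    have hnum : (M 0 0 * z₀ + M 1 0) / (M 0 1 * z₀ + M 1 1) - z₀ =
        ((M 0 0 - 1) * z₀ + (M 1 0 + (-(M 0 1 * z₀ * z₀) + -((M 1 1 - 1) * z₀)))) /
          (M 0 1 * z₀ + M 1 1) := by
      rw [eq_div_iff hdne, sub_mul, div_mul_cancel₀ _ hdne]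
      ring
    rw [hnum, norm_div, hdnorm, div_one]
    have bnd : ∀ x : F, ‖x‖ ≤ ‖ϖ‖ ^ k → ‖x * z₀‖ ≤ ‖ϖ‖ ^ k := fun x hx => by
      calc ‖x * z₀‖ = ‖x‖ * ‖z₀‖ := norm_mul _ _
        _ ≤ ‖ϖ‖ ^ k * 1 := mul_le_mul hx hz₀ (norm_nonneg _) hε0
        _ = ‖ϖ‖ ^ k := mul_one _
    have h1 : ‖(M 0 0 - 1) * z₀‖ ≤ ‖ϖ‖ ^ k := bnd _ ha
    have h2 : ‖-(M 0 1 * z₀ * z₀)‖ ≤ ‖ϖ‖ ^ k := by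
      rw [norm_neg]; exact bnd _ (bnd _ hb)
    have h3 : ‖-((M 1 1 - 1) * z₀)‖ ≤ ‖ϖ‖ ^ k := by
      rw [norm_neg]; exact bnd _ hd
    refine (IsUltrametricDist.norm_add_le_max _ _).trans (max_le h1 ?_)
    refine (IsUltrametricDist.norm_add_le_max _ _).trans (max_le hc ?_)
    exact (IsUltrametricDist.norm_add_le_max _ _).trans (max_le h2 h3)
  · rintro ⟨z, hz, rfl⟩
    refine ⟨Matrix.GeneralLinearGroup.mkOfDetNeZero !![1, 0; z - z₀, 1]
      (by simp [Matrix.det_fin_two_of]), ?_, ?_⟩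
    all_goals
      have hcoe : ((Matrix.GeneralLinearGroup.mkOfDetNeZero !![1, 0; z - z₀, 1]
          (by simp [Matrix.det_fin_two_of]) : GL (Fin 2) F) : Matrix (Fin 2) (Fin 2) F)
          = !![1, 0; z - z₀, 1] := rfl
    · refine ⟨?_, ?_, ?_, ?_⟩ <;> rw [hcoe] <;> simp [hz, hε0]
    · rw [hcoe]; simp [moeb]
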